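/- Let A be a Schur ring over a finite group G, H ≤ G an A-subgroup, and X a basic set of A. Then there exists a positive integer ℓ such that for every x ∈ G, |Hx ∩ X| equals 0 or ℓ. -/

import Mathlib

open scoped Pointwise

noncomputable def clsum {G : Type*} [Group G] [Fintype G] (s : Set G) :
    MonoidAlgebra ℤ G :=
  ∑ x ∈ s.toFinite.toFinset, MonoidAlgebra.of ℤ G x

structure SchurRing (G : Type*) [Group G] [Fintype G] where
  P : Set (Set G)
  one_mem : ({(1 : G)} : Set G) ∈ P
  nonempty_cls : ∀ X ∈ P, X.Nonempty
  cover : ∀ g : G, ∃ X ∈ P, g ∈ X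
  disj : ∀ X ∈ P, ∀ Y ∈ P, X ≠ Y → Disjoint X Y
  inv_mem : ∀ X ∈ P, X⁻¹ ∈ P
  mul_closed : ∀ X ∈ P, ∀ Y ∈ P,
    clsum X * clsum Y ∈ Submodule.span ℤ (clsum '' P)

def SchurRing.isASet {G : Type*} [Group G] [Fintype G] (A : SchurRing G) (X : Set G) : Prop :=
  clsum X ∈ Submodule.span ℤ (clsum '' A.P)

open Classical in
lemma clsum_apply {G : Type*} [Group G] [Fintype G] (s : Set G) (g : G) :
    (clsum s).coeff g = if g ∈ s then 1 else 0 := by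
  rw [clsum, MonoidAlgebra.coeff_sum, Finset.sum_apply']
  simp only [MonoidAlgebra.of_apply, MonoidAlgebra.coeff_single, Finsupp.single_apply]
  rw [Finset.sum_ite_eq' _ g (fun _ => (1:ℤ))]
  by_cases h : s g <;> simp [Set.Finite.mem_toFinset, h, show g ∈ s ↔ s g from Iff.rfl]

open Classical in
lemma clsum_mul_apply {G : Type*} [Group G] [Fintype G] (s t : Set G) (g : G) :
    (clsum s * clsum t).coeff g =
      ((s.toFinite.toFinset ×ˢ t.toFinite.toFinset).filter (fun p : G × G => p.1 * p.2 = g)).card := by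
  rw [clsum, clsum, Finset.sum_mul_sum]
  simp only [← map_mul]
  rw [MonoidAlgebra.coeff_sum, Finset.sum_apply']
  rw [Finset.card_filter, Finset.sum_product]
  push_cast
  refine Finset.sum_congr rfl fun a _ => ?_
  rw [MonoidAlgebra.coeff_sum, Finset.sum_apply']
  refine Finset.sum_congr rfl fun b _ => ?_
  simp [MonoidAlgebra.of_apply, MonoidAlgebra.coeff_single, Finsupp.single_apply]

lemma const_on_basic {G : Type*} [Group G] [Fintype G] (A : SchurRing G)
    {v : MonoidAlgebra ℤ G} (hv : v ∈ Submodule.span ℤ (clsum '' A.P)) {X : Set G}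
    (hX : X ∈ A.P) {g g' : G} (hg : g ∈ X) (hg' : g' ∈ X) : v.coeff g = v.coeff g' := by
  induction hv using Submodule.span_induction with
  | mem w hw =>
    obtain ⟨Y, hY, rfl⟩ := hw
    rw [clsum_apply, clsum_apply]
    by_cases h : X = Y
    · subst h; simp [hg, hg']
    · have hd := A.disj X hX Y hY h
      have h1 : g ∉ Y := fun hgy => (Set.disjoint_left.mp hd hg) hgy
      have h2 : g' ∉ Y := fun hgy => (Set.disjoint_left.mp hd hg') hgy
      simp [h1, h2]
  | zero => simp
  | add u w _ _ hu hw => rw [MonoidAlgebra.coeff_add, Finsupp.add_apply, Finsupp.add_apply, hu, hw]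
  | smul c u _ hu => rw [MonoidAlgebra.coeff_smul_apply, MonoidAlgebra.coeff_smul_apply, hu]

open Classical in
lemma coset_count {G : Type*} [Group G] [Fintype G] (H : Subgroup G) (X : Set G) (x : G) :
    (clsum (H : Set G) * clsum X).coeff x =
      ((((fun h => h * x) '' (H : Set G)) ∩ X).ncard : ℤ) := by
  rw [clsum_mul_apply]
  congr 1
  rw [Set.ncard_eq_toFinset_card']
  refine Finset.card_nbij' (fun p => p.2) (fun y => (x * y⁻¹, y)) ?_ ?_ ?_ ?_
  · rintro ⟨h, y⟩ hp
    simp only [Finset.mem_coe, Finset.mem_filter, Finset.mem_product, Set.Finite.mem_toFinset] at hp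
    obtain ⟨⟨hh, hy⟩, he⟩ := hp
    simp only [Finset.mem_coe, Set.mem_toFinset, Set.mem_inter_iff]
    refine ⟨⟨h⁻¹, inv_mem hh, ?_⟩, hy⟩
    rw [← he]; group
  · rintro y hy
    simp only [Finset.mem_coe, Set.mem_toFinset, Set.mem_inter_iff, Set.mem_image] at hy
    obtain ⟨⟨h, hh, rfl⟩, hyX⟩ := hy
    simp only [Finset.mem_coe, Finset.mem_filter, Finset.mem_product, Set.Finite.mem_toFinset]
    refine ⟨⟨?_, hyX⟩, by group⟩
    have : x * (h * x)⁻¹ = h⁻¹ := by group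
    rw [this]; exact inv_mem hh
  · rintro ⟨h, y⟩ hp
    simp only [Finset.mem_coe, Finset.mem_filter, Finset.mem_product, Set.Finite.mem_toFinset] at hp
    obtain ⟨⟨hh, hy⟩, he⟩ := hp
    simp only [Prod.mk.injEq]
    refine ⟨?_, trivial⟩
    rw [← he]; group
  · intro a _; rfl

/-- basic sets meet cosets of an A-subgroup in 0 or ℓ points. -/
theorem stmt6 {G : Type*} [Group G] [Fintype G] (A : SchurRing G) (H : Subgroup G)
    (hH : A.isASet (H : Set G)) (X : Set G) (hX : X ∈ A.P) :
    ∃ ℓ : ℕ, 0 < ℓ ∧ ∀ x : G,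
      (((fun h => h * x) '' (H : Set G)) ∩ X).ncard = 0 ∨
      (((fun h => h * x) '' (H : Set G)) ∩ X).ncard = ℓ := by
  classical
  -- the product lies in the span
  have key : ∀ v ∈ Submodule.span ℤ (clsum '' A.P),
      v * clsum X ∈ Submodule.span ℤ (clsum '' A.P) := by
    intro v hv
    induction hv using Submodule.span_induction with
    | mem w hw =>
      obtain ⟨Y, hY, rfl⟩ := hw
      exact A.mul_closed Y hY X hX
    | zero => rw [zero_mul]; exact Submodule.zero_mem _
    | add u w _ _ hu hw => rw [add_mul]; exact Submodule.add_mem _ hu hw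
    | smul c u _ hu => rw [smul_mul_assoc]; exact Submodule.smul_mem _ c hu
  have hspan : clsum (H : Set G) * clsum X ∈ Submodule.span ℤ (clsum '' A.P) :=
    key _ hH
  obtain ⟨x₀, hx₀⟩ := A.nonempty_cls X hX
  set f : G → ℕ := fun x => (((fun h => h * x) '' (H : Set G)) ∩ X).ncard with hf
  refine ⟨f x₀, ?_, ?_⟩
  · have hne : (((fun h => h * x₀) '' (H : Set G)) ∩ X).Nonempty :=
      ⟨x₀, ⟨1, H.one_mem, one_mul x₀⟩, hx₀⟩
    exact (Set.ncard_pos (Set.toFinite _)).mpr hne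
  · intro x
    by_cases h0 : f x = 0
    · exact Or.inl h0
    · right
      have hne : (((fun h => h * x) '' (H : Set G)) ∩ X).Nonempty := by
        rw [Set.nonempty_iff_ne_empty]
        intro hemp
        apply h0
        show (((fun h => h * x) '' (H : Set G)) ∩ X).ncard = 0
        rw [hemp, Set.ncard_empty]
      obtain ⟨y, ⟨h, hh, rfl⟩, hyX⟩ := hne
      -- cosets agree: image over H of (·*x) equals (·*(h*x))
      have hcoset : ((fun a => a * x) '' (H : Set G)) = ((fun a => a * (h * x)) '' (H : Set G)) := by
        ext z
        constructor
        · rintro ⟨a, ha, rfl⟩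
          exact ⟨a * h⁻¹, mul_mem ha (inv_mem hh), by group⟩
        · rintro ⟨a, ha, rfl⟩
          exact ⟨a * h, mul_mem ha hh, by group⟩
      have e1 : (f x : ℤ) = f (h * x) := by
        simp only [hf]; rw [hcoset]
      have e2 : (f (h * x) : ℤ) = f x₀ := by
        rw [hf]
        simp only
        rw [← coset_count H X (h * x), ← coset_count H X x₀]
        exact const_on_basic A hspan hX hyX hx₀
      exact_mod_cast e1.trans e2
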